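/- arXiv:1405.5767 — 2 statements merged into one kernel-verified Lean document; each statement's English description precedes it below -/
import Mathlib

section
/- For every r > 1 there exists a constant C(r) such that for every entire function f, every k ∈ ℕ, and every z ∈ ℂ: |f^{(k)}(z)|² ≤ (k!)² · C(r) · e^{|z|²} · (1+|z|)^{2k} · ∫_{B(z,r)} |f(ζ)|² e^{-|ζ|²} dV(ζ), where B(z,r) is the disk of radius r centered at z. -/
open MeasureTheory Complex Real Filter
open scoped Nat

/-- The Gaussian-weighted square integrand for the Fock space. -/
noncomputable def fockIntegrand (f : ℂ → ℂ) (z : ℂ) : ℝ := ‖f z‖ ^ 2 * Real.exp (-‖z‖ ^ 2)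

/-- The squared Fock norm: π⁻¹ ∫ |f|² e^{-|z|²} dV. -/
noncomputable def fockNormSq (f : ℂ → ℂ) : ℝ := π⁻¹ * ∫ z : ℂ, fockIntegrand f z

/-- Membership in the Fock space F²(ℂ): entire and Gaussian square-integrable. -/
def MemFock (f : ℂ → ℂ) : Prop := Differentiable ℂ f ∧ Integrable (fockIntegrand f)

open Metric intervalIntegral Set

lemma circle_mean_sq (g : ℂ → ℂ) (hg : Differentiable ℂ g) (w : ℂ) {ρ : ℝ} (hρ : 0 < ρ) :
    2 * π * ‖g w‖ ^ 2 ≤ ∫ θ in (0:ℝ)..(2*π), ‖g (circleMap w ρ θ)‖ ^ 2 := by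
  have key := circleIntegral_sub_inv_smul_of_differentiable_on_off_countable
    (R := ρ) (c := w) (w := w) (f := fun ζ => g ζ ^ 2) (s := (∅ : Set ℂ))
    Set.countable_empty (mem_ball_self hρ)
    ((hg.pow 2).continuous.continuousOn)
    (fun x _ => (hg.pow 2).differentiableAt)
  have hne : ∀ θ : ℝ, circleMap 0 ρ θ ≠ 0 := fun θ => by
    simp [circleMap_eq_center_iff] at *
    · exact hρ.ne'
  have h1 : (∮ z in C(w, ρ), (z - w)⁻¹ • g z ^ 2)
      = ∫ θ in (0:ℝ)..(2*π), I • g (circleMap w ρ θ) ^ 2 := by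
    rw [circleIntegral]
    refine intervalIntegral.integral_congr fun θ _ => ?_
    rw [deriv_circleMap, circleMap_sub_center]
    simp only [smul_eq_mul]
    field_simp [hne θ]
  have h2 : ‖(2 * (π:ℂ) * I) • g w ^ 2‖ = 2 * π * ‖g w‖ ^ 2 := by
    simp [norm_smul, norm_pow, _root_.abs_of_nonneg Real.pi_pos.le]

  calc 2 * π * ‖g w‖ ^ 2 = ‖(2 * (π:ℂ) * I) • g w ^ 2‖ := h2.symm
    _ = ‖∫ θ in (0:ℝ)..(2*π), I • g (circleMap w ρ θ) ^ 2‖ := by rw [← key, h1]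
    _ ≤ ∫ θ in (0:ℝ)..(2*π), ‖I • g (circleMap w ρ θ) ^ 2‖ :=
        intervalIntegral.norm_integral_le_integral_norm Real.two_pi_pos.le
    _ = ∫ θ in (0:ℝ)..(2*π), ‖g (circleMap w ρ θ)‖ ^ 2 := by
        refine intervalIntegral.integral_congr fun θ _ => ?_
        simp [norm_smul, norm_pow]

lemma submean (g : ℂ → ℂ) (hg : Differentiable ℂ g) (w : ℂ) {s : ℝ} (hs : 0 < s) :
    π * s ^ 2 * ‖g w‖ ^ 2 ≤ ∫ ζ in Metric.ball w s, ‖g ζ‖ ^ 2 := by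
  have hgc : Continuous g := hg.continuous
  set u : ℂ → ℝ := fun ζ => ‖g (w + ζ)‖ ^ 2 with hu
  have hucont : Continuous u := by fun_prop
  set e : ℝ × ℝ → ℂ := fun p => p.1 * (Real.cos p.2 + Real.sin p.2 * I) with he
  have hecont : Continuous e := by fun_prop
  have hesymm : ∀ p, Complex.polarCoord.symm p = e p := fun p => by
    rw [Complex.polarCoord_symm_apply]
  have hcm : ∀ ρ θ : ℝ, w + e (ρ, θ) = circleMap w ρ θ := by
    intro ρ θ
    simp [he, circleMap, Complex.exp_mul_I, ← Complex.ofReal_cos, ← Complex.ofReal_sin]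
  set G : ℝ × ℝ → ℝ := fun p => p.1 * u (e p) with hG
  have hGcont : Continuous G := by fun_prop
  set T : Set (ℝ × ℝ) := Ioo 0 s ×ˢ Ioo (-π) π with hT
  -- Step A: translate
  have stepA : ∫ ζ in Metric.ball w s, ‖g ζ‖ ^ 2
      = ∫ ζ, (Metric.ball (0:ℂ) s).indicator u ζ := by
    rw [← MeasureTheory.integral_indicator measurableSet_ball, ← integral_add_left_eq_self _ w]
    congr 1
    ext ζ
    by_cases hζ : ζ ∈ Metric.ball (0:ℂ) s
    · rw [Set.indicator_of_mem hζ, Set.indicator_of_mem (by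
        simpa [Metric.mem_ball, dist_eq_norm] using hζ)]
    · rw [Set.indicator_of_notMem hζ, Set.indicator_of_notMem (by
        simpa [Metric.mem_ball, dist_eq_norm] using hζ)]
  -- Step B: polar coordinates
  have stepB : ∫ ζ, (Metric.ball (0:ℂ) s).indicator u ζ
      = ∫ p in polarCoord.target, p.1 • (Metric.ball (0:ℂ) s).indicator u
          (Complex.polarCoord.symm p) :=
    (Complex.integral_comp_polarCoord_symm _).symm
  -- Step C: reduce to the finite rectangle T
  have stepC : ∫ p in polarCoord.target, p.1 • (Metric.ball (0:ℂ) s).indicator u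
      (Complex.polarCoord.symm p) = ∫ p in T, G p := by
    rw [setIntegral_congr_fun polarCoord.open_target.measurableSet
      (g := fun p => T.indicator G p) (fun p hp => ?_)]
    · rw [setIntegral_indicator (by rw [hT]; measurability), inter_eq_right.mpr (by
        rw [hT, polarCoord_target]
        exact Set.prod_mono Set.Ioo_subset_Ioi_self le_rfl)]
    · rw [polarCoord_target] at hp
      show p.1 • (Metric.ball (0:ℂ) s).indicator u (Complex.polarCoord.symm p)
        = T.indicator G p
      by_cases hps : p.1 < s
      · have hmem : Complex.polarCoord.symm p ∈ Metric.ball (0:ℂ) s := by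
          rw [Metric.mem_ball, dist_zero_right,
            Complex.norm_polarCoord_symm, _root_.abs_of_pos hp.1]
          exact hps
        have hpT : p ∈ T := ⟨⟨hp.1, hps⟩, hp.2⟩
        rw [Set.indicator_of_mem hmem, Set.indicator_of_mem hpT, hG]
        simp [hesymm p, smul_eq_mul]
      · have hmem : Complex.polarCoord.symm p ∉ Metric.ball (0:ℂ) s := by
          rw [Metric.mem_ball, dist_zero_right,
            Complex.norm_polarCoord_symm, _root_.abs_of_pos hp.1]
          exact hps
        have hpT : p ∉ T := fun hmem' => hps hmem'.1.2
        rw [Set.indicator_of_notMem hmem, Set.indicator_of_notMem hpT]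
        simp
  -- integrability on T
  have hKcomp : IsCompact (Icc (0:ℝ) s ×ˢ Icc (-π) π) := isCompact_Icc.prod isCompact_Icc
  have hTsub : T ⊆ Icc (0:ℝ) s ×ˢ Icc (-π) π :=
    Set.prod_mono Ioo_subset_Icc_self Ioo_subset_Icc_self
  have hGint : IntegrableOn G T := by
    exact (hGcont.continuousOn.integrableOn_compact hKcomp).mono_set hTsub
  -- Fubini
  have hGint' : IntegrableOn G (Ioo 0 s ×ˢ Ioo (-π) π) (volume.prod volume) := by
    rwa [← Measure.volume_eq_prod]
  have stepD : ∫ p in T, G p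
      = ∫ ρ in Ioo (0:ℝ) s, ∫ θ in Ioo (-π) π, G (ρ, θ) := by
    rw [hT, Measure.volume_eq_prod, setIntegral_prod _ hGint']
  -- inner bound
  have inner_bd : ∀ ρ ∈ Ioo (0:ℝ) s,
      2 * π * ‖g w‖ ^ 2 * ρ ≤ ∫ θ in Ioo (-π) π, G (ρ, θ) := by
    intro ρ hρ
    have h1 : ∫ θ in Ioo (-π) π, G (ρ, θ)
        = ρ * ∫ θ in (-π)..π, ‖g (circleMap w ρ θ)‖ ^ 2 := by
      rw [intervalIntegral.integral_of_le (by linarith [Real.pi_pos]),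
        ← MeasureTheory.integral_Ioc_eq_integral_Ioo, ← MeasureTheory.integral_const_mul]
      refine setIntegral_congr_fun measurableSet_Ioc fun θ _ => ?_
      rw [hG]
      simp only [hu]
      rw [hcm ρ θ]
    have hper : Function.Periodic (fun θ => ‖g (circleMap w ρ θ)‖ ^ 2) (2 * π) :=
      fun θ => by simp only [periodic_circleMap w ρ θ]
    have h2 : ∫ θ in (-π)..π, ‖g (circleMap w ρ θ)‖ ^ 2
        = ∫ θ in (0:ℝ)..(2*π), ‖g (circleMap w ρ θ)‖ ^ 2 := by
      have h := hper.intervalIntegral_add_eq (-π) 0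
      rw [zero_add] at h
      rw [show -π + 2*π = π by ring] at h
      exact h
    rw [h1, h2]
    calc 2 * π * ‖g w‖ ^ 2 * ρ = ρ * (2 * π * ‖g w‖ ^ 2) := by ring
      _ ≤ ρ * ∫ θ in (0:ℝ)..(2*π), ‖g (circleMap w ρ θ)‖ ^ 2 :=
        mul_le_mul_of_nonneg_left (circle_mean_sq g hg w hρ.1) hρ.1.le
  -- outer bound
  have houter_int : IntegrableOn (fun ρ => ∫ θ in Ioo (-π) π, G (ρ, θ)) (Ioo (0:ℝ) s) := by
    rw [IntegrableOn, ← Measure.prod_restrict] at hGint'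
    exact hGint'.integral_prod_left
  have hint1 : IntegrableOn (fun ρ => 2 * π * ‖g w‖ ^ 2 * ρ) (Ioo (0:ℝ) s) :=
    ((by fun_prop : Continuous fun ρ : ℝ => 2 * π * ‖g w‖ ^ 2 * ρ).continuousOn.integrableOn_compact
      isCompact_Icc).mono_set Ioo_subset_Icc_self
  calc π * s ^ 2 * ‖g w‖ ^ 2 = ∫ ρ in Ioo (0:ℝ) s, 2 * π * ‖g w‖ ^ 2 * ρ := by
        rw [← MeasureTheory.integral_Ioc_eq_integral_Ioo,
          ← intervalIntegral.integral_of_le hs.le, intervalIntegral.integral_const_mul,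
          integral_id]
        ring
    _ ≤ ∫ ρ in Ioo (0:ℝ) s, ∫ θ in Ioo (-π) π, G (ρ, θ) :=
        setIntegral_mono_on hint1 houter_int measurableSet_Ioo inner_bd
    _ = ∫ ζ in Metric.ball w s, ‖g ζ‖ ^ 2 := by rw [← stepD, ← stepC, ← stepB, ← stepA]

lemma fockIntegrand_cont (f : ℂ → ℂ) (hf : Continuous f) : Continuous (fockIntegrand f) := by
  unfold fockIntegrand; fun_prop

lemma fockIntegrand_nonneg (f : ℂ → ℂ) (ζ : ℂ) : 0 ≤ fockIntegrand f ζ := by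
  unfold fockIntegrand; positivity

lemma fock0 (f : ℂ → ℂ) (hf : Differentiable ℂ f) (w : ℂ) {s : ℝ} (hs : 0 < s) :
    ‖f w‖ ^ 2 ≤ (π * s ^ 2)⁻¹ * Real.exp (s ^ 2) * Real.exp (‖w‖ ^ 2) *
      ∫ ζ in Metric.ball w s, fockIntegrand f ζ := by
  set gw : ℂ → ℂ := fun ζ => f ζ * Complex.exp (((‖w‖^2/2 : ℝ) : ℂ) - (starRingEnd ℂ w) * ζ)
    with hgw
  have hgwd : Differentiable ℂ gw := by
    apply hf.mul
    apply Complex.differentiable_exp.comp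
    fun_prop
  have hnorm : ∀ ζ : ℂ, ‖gw ζ‖ ^ 2 = ‖f ζ‖ ^ 2 * Real.exp (‖ζ - w‖ ^ 2 - ‖ζ‖ ^ 2) := by
    intro ζ
    rw [hgw]
    simp only [norm_mul, mul_pow, Complex.norm_exp]
    congr 1
    rw [← Real.exp_nat_mul]
    congr 1
    simp only [Complex.sub_re, Complex.ofReal_re, Complex.mul_re, Complex.conj_re,
      Complex.conj_im, Complex.sq_norm, Complex.normSq_apply, Complex.sub_im, Complex.ofReal_im]
    push_cast
    ring
  have h1 := submean gw hgwd w hs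
  have hgww : ‖gw w‖ ^ 2 = ‖f w‖ ^ 2 * Real.exp (-‖w‖ ^ 2) := by
    rw [hnorm w]; simp
  -- pointwise bound on the ball
  have hptwise : ∀ ζ ∈ Metric.ball w s, ‖gw ζ‖ ^ 2 ≤ Real.exp (s ^ 2) * fockIntegrand f ζ := by
    intro ζ hζ
    rw [hnorm ζ]
    unfold fockIntegrand
    have hle : ‖ζ - w‖ ^ 2 ≤ s ^ 2 := by
      rw [Metric.mem_ball, dist_eq_norm] at hζ
      nlinarith [norm_nonneg (ζ - w)]
    have h5 : Real.exp (‖ζ - w‖ ^ 2 - ‖ζ‖ ^ 2)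
        ≤ Real.exp (s ^ 2) * Real.exp (-‖ζ‖ ^ 2) := by
      rw [← Real.exp_add]
      exact Real.exp_le_exp.mpr (by linarith)
    calc ‖f ζ‖ ^ 2 * Real.exp (‖ζ - w‖ ^ 2 - ‖ζ‖ ^ 2)
        ≤ ‖f ζ‖ ^ 2 * (Real.exp (s ^ 2) * Real.exp (-‖ζ‖ ^ 2)) :=
          mul_le_mul_of_nonneg_left h5 (by positivity)
      _ = Real.exp (s ^ 2) * (‖f ζ‖ ^ 2 * Real.exp (-‖ζ‖ ^ 2)) := by ring
  have hgwint : IntegrableOn (fun ζ => ‖gw ζ‖ ^ 2) (Metric.ball w s) :=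
    ((by have := hgwd.continuous; fun_prop : Continuous fun ζ => ‖gw ζ‖ ^ 2).continuousOn.integrableOn_compact
      (isCompact_closedBall w s)).mono_set Metric.ball_subset_closedBall
  have hfint : IntegrableOn (fun ζ => Real.exp (s ^ 2) * fockIntegrand f ζ) (Metric.ball w s) :=
    (((continuous_const.mul (fockIntegrand_cont f hf.continuous)) :
      Continuous fun ζ => Real.exp (s ^ 2) * fockIntegrand f ζ).continuousOn.integrableOn_compact
      (isCompact_closedBall w s)).mono_set Metric.ball_subset_closedBall
  have h2 : ∫ ζ in Metric.ball w s, ‖gw ζ‖ ^ 2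
      ≤ Real.exp (s ^ 2) * ∫ ζ in Metric.ball w s, fockIntegrand f ζ := by
    rw [← MeasureTheory.integral_const_mul]
    exact setIntegral_mono_on hgwint hfint measurableSet_ball hptwise
  have h3 : π * s ^ 2 * (‖f w‖ ^ 2 * Real.exp (-‖w‖ ^ 2))
      ≤ Real.exp (s ^ 2) * ∫ ζ in Metric.ball w s, fockIntegrand f ζ := by
    rw [← hgww]; exact h1.trans h2
  have hπ : (0:ℝ) < π * s ^ 2 := by positivity
  have h4 := mul_le_mul_of_nonneg_left h3
    (le_of_lt (by positivity : (0:ℝ) < (π * s ^ 2)⁻¹ * Real.exp (‖w‖ ^ 2)))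
  calc ‖f w‖ ^ 2
      = ((π * s ^ 2)⁻¹ * Real.exp (‖w‖ ^ 2)) *
        (π * s ^ 2 * (‖f w‖ ^ 2 * Real.exp (-‖w‖ ^ 2))) := by
        rw [Real.exp_neg]
        field_simp
    _ ≤ ((π * s ^ 2)⁻¹ * Real.exp (‖w‖ ^ 2)) *
        (Real.exp (s ^ 2) * ∫ ζ in Metric.ball w s, fockIntegrand f ζ) := h4
    _ = (π * s ^ 2)⁻¹ * Real.exp (s ^ 2) * Real.exp (‖w‖ ^ 2) *
        ∫ ζ in Metric.ball w s, fockIntegrand f ζ := by ring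

lemma cauchy_est (f : ℂ → ℂ) (hf : Differentiable ℂ f) (z : ℂ) (k : ℕ) {ρ : ℝ} (hρ : 0 < ρ)
    {A : ℝ} (hA : 0 ≤ A) (hbd : ∀ θ : ℝ, ‖f (circleMap z ρ θ)‖ ≤ A) :
    ‖iteratedDeriv k f z‖ ≤ (k ! : ℝ) * A * ρ⁻¹ ^ k := by
  have hps := hf.hasFPowerSeriesOnBall z (R := ⟨ρ, hρ.le⟩) (by exact_mod_cast hρ)
  have hfact := hps.factorial_smul (y := (1:ℂ)) k
  have heq : ‖iteratedDeriv k f z‖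
      = (k ! : ℝ) * ‖cauchyPowerSeries f z ρ k (fun _ => (1:ℂ))‖ := by
    rw [iteratedDeriv_eq_iteratedFDeriv, ← hfact, nsmul_eq_mul]
    push_cast
    rw [norm_mul, Complex.norm_natCast]
    rfl
  rw [heq]
  have hle1 : ‖cauchyPowerSeries f z ρ k (fun _ => (1:ℂ))‖ ≤ ‖cauchyPowerSeries f z ρ k‖ := by
    have := (cauchyPowerSeries f z ρ k).le_opNorm (fun _ => (1:ℂ))
    simpa using this
  have hle2 := norm_cauchyPowerSeries_le f z ρ k
  have hint : ∫ θ in (0:ℝ)..(2*π), ‖f (circleMap z ρ θ)‖ ≤ 2 * π * A := by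
    have h := intervalIntegral.integral_mono_on (a := (0:ℝ)) (b := 2*π)
      (f := fun θ => ‖f (circleMap z ρ θ)‖) (g := fun _ => A) Real.two_pi_pos.le
      ((by have := hf.continuous; fun_prop : Continuous fun θ => ‖f (circleMap z ρ θ)‖).intervalIntegrable _ _)
      (_root_.intervalIntegrable_const (μ := volume) (c := A)) (fun θ _ => hbd θ)
    simpa using h
  have hle3 : ‖cauchyPowerSeries f z ρ k‖ ≤ A * ρ⁻¹ ^ k := by
    refine hle2.trans ?_
    have hA2 : (2*π)⁻¹ * (∫ θ in (0:ℝ)..(2*π), ‖f (circleMap z ρ θ)‖) ≤ A := by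
      rw [inv_mul_le_iff₀ Real.two_pi_pos]
      exact hint
    calc ((2*π)⁻¹ * ∫ θ in (0:ℝ)..(2*π), ‖f (circleMap z ρ θ)‖) * |ρ|⁻¹ ^ k
        ≤ A * |ρ|⁻¹ ^ k := mul_le_mul_of_nonneg_right hA2 (by positivity)
      _ = A * ρ⁻¹ ^ k := by rw [_root_.abs_of_pos hρ]
  calc (k ! : ℝ) * ‖cauchyPowerSeries f z ρ k (fun _ => (1:ℂ))‖
      ≤ (k ! : ℝ) * (A * ρ⁻¹ ^ k) :=
        mul_le_mul_of_nonneg_left (hle1.trans hle3) (by positivity)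
    _ = (k ! : ℝ) * A * ρ⁻¹ ^ k := by ring

/-- Local estimate for derivatives of entire functions:
|f^{(k)}(z)|² ≤ (k!)² C(r) e^{|z|²} (1+|z|)^{2k} ∫_{B(z,r)} |f|² e^{-|ζ|²} dV. -/
theorem fock_derivative_local_estimate (r : ℝ) (hr : 1 < r) :
    ∃ C : ℝ, 0 < C ∧ ∀ f : ℂ → ℂ, Differentiable ℂ f → ∀ (k : ℕ) (z : ℂ),
      ‖iteratedDeriv k f z‖ ^ 2 ≤
        ((k ! : ℝ)) ^ 2 * C * Real.exp (‖z‖ ^ 2) * (1 + ‖z‖) ^ (2 * k) *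
          ∫ ζ in Metric.ball z r, fockIntegrand f ζ := by
  have ht0 : (0:ℝ) < r - 1 := by linarith
  refine ⟨(π * (r-1)^2)⁻¹ * Real.exp ((r-1)^2 + 3), by positivity, ?_⟩
  intro f hf k z
  set t : ℝ := r - 1 with htdef
  set ρ : ℝ := (1 + ‖z‖)⁻¹ with hρdef
  have hρ0 : 0 < ρ := by positivity
  have hρ1 : ρ ≤ 1 := by
    rw [hρdef]
    exact inv_le_one_of_one_le₀ (by linarith [norm_nonneg z])
  set Iv : ℝ := ∫ ζ in Metric.ball z r, fockIntegrand f ζ with hIv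
  have hIv0 : 0 ≤ Iv :=
    setIntegral_nonneg measurableSet_ball (fun ζ _ => fockIntegrand_nonneg f ζ)
  have hfockint : IntegrableOn (fockIntegrand f) (Metric.ball z r) :=
    ((fockIntegrand_cont f hf.continuous).continuousOn.integrableOn_compact
      (isCompact_closedBall z r)).mono_set Metric.ball_subset_closedBall
  set K : ℝ := (π * t^2)⁻¹ * Real.exp (t^2 + 3) * Real.exp (‖z‖^2) * Iv with hK
  have hK0 : 0 ≤ K := by positivity
  have hA : ∀ θ : ℝ, ‖f (circleMap z ρ θ)‖ ≤ Real.sqrt K := by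
    intro θ
    set w : ℂ := circleMap z ρ θ with hw
    have hwz : ‖w - z‖ = ρ := by
      have := circleMap_mem_sphere z hρ0.le θ
      rwa [mem_sphere_iff_norm] at this
    have hsub : Metric.ball w t ⊆ Metric.ball z r := by
      intro ζ hζ
      rw [Metric.mem_ball] at hζ ⊢
      have h1 : dist ζ z ≤ dist ζ w + dist w z := dist_triangle ζ w z
      have h1' : dist w z = ρ := by rw [dist_eq_norm, hwz]
      rw [h1'] at h1
      linarith
    have h2 : ∫ ζ in Metric.ball w t, fockIntegrand f ζ ≤ Iv :=
      setIntegral_mono_set hfockint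
        (Filter.Eventually.of_forall fun ζ => fockIntegrand_nonneg f ζ)
        (HasSubset.Subset.eventuallyLE hsub)
    have hwn : ‖w‖ ≤ ρ + ‖z‖ := by
      calc ‖w‖ = ‖(w - z) + z‖ := by ring_nf
        _ ≤ ‖w - z‖ + ‖z‖ := norm_add_le _ _
        _ = ρ + ‖z‖ := by rw [hwz]
    have hρz : ρ * ‖z‖ ≤ 1 := by
      rw [hρdef, inv_mul_le_iff₀ (by positivity)]
      linarith [norm_nonneg z]
    have hwsq : ‖w‖^2 ≤ ‖z‖^2 + 3 := by
      nlinarith [norm_nonneg w, norm_nonneg z]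
    have hKb : ‖f w‖^2 ≤ K := by
      calc ‖f w‖^2 ≤ (π * t^2)⁻¹ * Real.exp (t^2) * Real.exp (‖w‖^2) *
            ∫ ζ in Metric.ball w t, fockIntegrand f ζ := fock0 f hf w ht0
        _ ≤ (π * t^2)⁻¹ * Real.exp (t^2) * Real.exp (‖z‖^2 + 3) * Iv := by
            have hwexp : Real.exp (‖w‖^2) ≤ Real.exp (‖z‖^2 + 3) := Real.exp_le_exp.mpr hwsq
            have hJ0 : 0 ≤ ∫ ζ in Metric.ball w t, fockIntegrand f ζ :=
              setIntegral_nonneg measurableSet_ball (fun ζ _ => fockIntegrand_nonneg f ζ)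
            gcongr
        _ = K := by
            have hee : Real.exp (t^2) * Real.exp (‖z‖^2 + 3)
                = Real.exp (t^2 + 3) * Real.exp (‖z‖^2) := by
              rw [← Real.exp_add, ← Real.exp_add]; ring_nf
            rw [hK]
            linear_combination ((π * t ^ 2)⁻¹ * Iv) * hee
    have := Real.sqrt_le_sqrt hKb
    rwa [Real.sqrt_sq (norm_nonneg _)] at this
  have hcau := cauchy_est f hf z k hρ0 (Real.sqrt_nonneg K) hA
  have hρinv : ρ⁻¹ = 1 + ‖z‖ := by rw [hρdef, inv_inv]
  calc ‖iteratedDeriv k f z‖ ^ 2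
      ≤ ((k ! : ℝ) * Real.sqrt K * ρ⁻¹ ^ k) ^ 2 :=
        pow_le_pow_left₀ (norm_nonneg _) hcau 2
    _ = (k ! : ℝ)^2 * K * (1 + ‖z‖) ^ (2 * k) := by
        rw [mul_pow, mul_pow, Real.sq_sqrt hK0, hρinv, ← pow_mul, mul_comm k 2]
    _ = (k ! : ℝ)^2 * ((π * (r-1)^2)⁻¹ * Real.exp ((r-1)^2 + 3)) * Real.exp (‖z‖^2) *
          (1 + ‖z‖) ^ (2 * k) * Iv := by
        rw [hK, htdef]; ring
end

section
/- Let μ be a positive Borel measure on ℂ, k ∈ ℕ, and r > 0. If there exists a constant ϖ such that ∫_ℂ |f^{(k)}(z)|² e^{-|z|²} dμ(z) ≤ ϖ‖f‖²_{F²} for all f ∈ F²(ℂ), then sup_{z∈ℂ} μ(B(z,r)) (1+|z|²)^k < ∞. -/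
open MeasureTheory Complex Real Filter

lemma integrable_gauss : Integrable (fun z : ℂ => Real.exp (-‖z‖ ^ 2)) := by
  have h := (GaussianFourier.integrable_cexp_neg_mul_sq_norm_add (V := ℂ) (b := 1)
    (by simp) 0 0).norm
  refine h.congr (Filter.Eventually.of_forall fun v => ?_)
  simp [Complex.norm_exp, ← Complex.ofReal_pow]

lemma hd_aux (a : ℂ) (x : ℂ) (c : ℂ) :
    HasDerivAt (fun z : ℂ => Complex.exp (z * a) * c) (Complex.exp (x * a) * a * c) x := by
  have := ((hasDerivAt_mul_const (x := x) a).cexp).mul_const c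
  convert this using 1

lemma iter_exp (a : ℂ) : ∀ (k : ℕ) (c z : ℂ),
    iteratedDeriv k (fun z => Complex.exp (z * a) * c) z
      = a ^ k * (Complex.exp (z * a) * c) := by
  intro k
  induction k with
  | zero => intro c z; simp
  | succ n ih =>
    intro c z
    rw [iteratedDeriv_succ']
    have hderiv : (deriv fun z : ℂ => Complex.exp (z * a) * c)
        = fun z : ℂ => Complex.exp (z * a) * (a * c) := by
      funext x
      rw [(hd_aux a x c).deriv]; ring
    rw [hderiv, ih (a * c) z]; ring

lemma kernel_norm (w z : ℂ) :
    ‖Complex.exp (z * (starRingEnd ℂ) w) * Complex.exp (Complex.ofReal (-(‖w‖ ^ 2) / 2))‖ ^ 2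
        * Real.exp (-‖z‖ ^ 2) = Real.exp (-‖z - w‖ ^ 2) := by
  rw [norm_mul, Complex.norm_exp, Complex.norm_exp,
    mul_pow, ← Real.exp_nat_mul, ← Real.exp_nat_mul, ← Real.exp_add, ← Real.exp_add]
  congr 1
  simp only [Complex.ofReal_re, Complex.mul_re, Complex.conj_re, Complex.conj_im,
    Complex.sq_norm, Complex.normSq_apply, Complex.sub_re, Complex.sub_im]
  push_cast
  ring

/-- Necessity in the characterization of k-Fock-Carleson measures:
if ∫ |f^{(k)}|² e^{-|z|²} dμ ≤ ϖ ‖f‖²_{F²} for all f ∈ F², then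
sup_z μ(B(z,r))(1+|z|²)^k < ∞ for every r > 0. -/
theorem kFC_measure_necessary (μ : Measure ℂ) (k : ℕ) (r : ℝ) (hr : 0 < r)
    (ϖ : ℝ)
    (h : ∀ f : ℂ → ℂ, MemFock f →
      ∫⁻ z, ENNReal.ofReal (‖iteratedDeriv k f z‖ ^ 2 * Real.exp (-‖z‖ ^ 2)) ∂μ ≤
        ENNReal.ofReal (ϖ * fockNormSq f)) :
    ∃ M : ℝ, ∀ z : ℂ, μ (Metric.ball z r) * ENNReal.ofReal ((1 + ‖z‖ ^ 2) ^ k) ≤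
      ENNReal.ofReal M := by
  set B : ℝ := π⁻¹ * ∫ z : ℂ, Real.exp (-‖z‖ ^ 2) with hB
  -- Key estimate from testing on normalized reproducing kernels
  have KEY : ∀ (w : ℂ) (s : ℝ), 0 < s →
      μ (Metric.ball w s) * ENNReal.ofReal (‖w‖ ^ (2 * k)) ≤
        ENNReal.ofReal (ϖ * B * Real.exp (s ^ 2)) := by
    intro w s hs
    set a : ℂ := (starRingEnd ℂ) w with ha
    set c : ℂ := Complex.exp (Complex.ofReal (-(‖w‖ ^ 2) / 2)) with hc
    set f : ℂ → ℂ := fun z => Complex.exp (z * a) * c with hf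
    have hfi : fockIntegrand f = fun z => Real.exp (-‖z - w‖ ^ 2) := by
      funext z
      simpa [fockIntegrand, hf, hc, ha] using kernel_norm w z
    have hmem : MemFock f := by
      constructor
      · exact fun x => (hd_aux a x c).differentiableAt
      · rw [hfi]
        exact integrable_gauss.comp_sub_right w
    have hnorm : fockNormSq f = B := by
      rw [fockNormSq, hfi, hB]
      congr 1
      exact integral_sub_right_eq_self (fun z : ℂ => Real.exp (-‖z‖ ^ 2)) w
    have hint := h f hmem
    rw [hnorm] at hint
    have hiter : ∀ z : ℂ, ‖iteratedDeriv k f z‖ ^ 2 * Real.exp (-‖z‖ ^ 2)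
        = ‖w‖ ^ (2 * k) * Real.exp (-‖z - w‖ ^ 2) := by
      intro z
      rw [hf, iter_exp a k c z, norm_mul, mul_pow, norm_pow, ha, RCLike.norm_conj,
        ← pow_mul, mul_comm k 2]
      have := kernel_norm w z
      rw [← hc] at this
      rw [mul_assoc, this]
    simp only [hiter] at hint
    -- lower bound the integral over the ball
    have hlow : ENNReal.ofReal (‖w‖ ^ (2 * k) * Real.exp (-s ^ 2)) * μ (Metric.ball w s) ≤
        ENNReal.ofReal (ϖ * B) := by
      have hmeas : Measurable fun z : ℂ =>
          ENNReal.ofReal (‖w‖ ^ (2 * k) * Real.exp (-‖z - w‖ ^ 2)) := by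
        apply Measurable.ennreal_ofReal
        fun_prop
      calc ENNReal.ofReal (‖w‖ ^ (2 * k) * Real.exp (-s ^ 2)) * μ (Metric.ball w s)
          = ∫⁻ _ in Metric.ball w s,
              ENNReal.ofReal (‖w‖ ^ (2 * k) * Real.exp (-s ^ 2)) ∂μ := by
            rw [setLIntegral_const]
        _ ≤ ∫⁻ z in Metric.ball w s,
              ENNReal.ofReal (‖w‖ ^ (2 * k) * Real.exp (-‖z - w‖ ^ 2)) ∂μ := by
            refine setLIntegral_mono hmeas fun z hz => ?_
            apply ENNReal.ofReal_le_ofReal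
            apply mul_le_mul_of_nonneg_left _ (by positivity)
            apply Real.exp_le_exp.2
            apply neg_le_neg
            have hz' : ‖z - w‖ < s := by
              rw [Metric.mem_ball, Complex.dist_eq] at hz; exact hz
            exact pow_le_pow_left₀ (norm_nonneg _) hz'.le 2
        _ ≤ ∫⁻ z, ENNReal.ofReal (‖w‖ ^ (2 * k) * Real.exp (-‖z - w‖ ^ 2)) ∂μ :=
            setLIntegral_le_lintegral _ _
        _ ≤ ENNReal.ofReal (ϖ * B) := hint
    have key1 : ENNReal.ofReal (Real.exp (-s ^ 2)) * ENNReal.ofReal (Real.exp (s ^ 2)) = 1 := by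
      rw [← ENNReal.ofReal_mul (Real.exp_pos _).le, ← Real.exp_add, neg_add_cancel,
        Real.exp_zero, ENNReal.ofReal_one]
    have h3 := mul_le_mul_left hlow (ENNReal.ofReal (Real.exp (s ^ 2)))
    have heq : ENNReal.ofReal (‖w‖ ^ (2 * k) * Real.exp (-s ^ 2)) * μ (Metric.ball w s) *
        ENNReal.ofReal (Real.exp (s ^ 2)) =
        μ (Metric.ball w s) * ENNReal.ofReal (‖w‖ ^ (2 * k)) := by
      rw [ENNReal.ofReal_mul (by positivity)]
      calc ENNReal.ofReal (‖w‖ ^ (2 * k)) * ENNReal.ofReal (Real.exp (-s ^ 2)) *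
            μ (Metric.ball w s) * ENNReal.ofReal (Real.exp (s ^ 2))
          = μ (Metric.ball w s) * ENNReal.ofReal (‖w‖ ^ (2 * k)) *
            (ENNReal.ofReal (Real.exp (-s ^ 2)) * ENNReal.ofReal (Real.exp (s ^ 2))) := by ring
        _ = μ (Metric.ball w s) * ENNReal.ofReal (‖w‖ ^ (2 * k)) := by rw [key1, mul_one]
    rw [heq] at h3
    calc μ (Metric.ball w s) * ENNReal.ofReal (‖w‖ ^ (2 * k))
        ≤ ENNReal.ofReal (ϖ * B) * ENNReal.ofReal (Real.exp (s ^ 2)) := h3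
      _ = ENNReal.ofReal (ϖ * B * Real.exp (s ^ 2)) :=
          (ENNReal.ofReal_mul' (Real.exp_pos _).le).symm
  refine ⟨max (2 ^ k * (ϖ * B * Real.exp (r ^ 2)))
    (ϖ * B * Real.exp ((r + 3) ^ 2) * 2 ^ k), fun w => ?_⟩
  rcases le_or_gt 1 ‖w‖ with hw | hw
  · -- large w : use the kernel at w directly
    have hpow : (1 + ‖w‖ ^ 2) ^ k ≤ 2 ^ k * ‖w‖ ^ (2 * k) := by
      have h1 : 1 + ‖w‖ ^ 2 ≤ 2 * ‖w‖ ^ 2 := by nlinarith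
      calc (1 + ‖w‖ ^ 2) ^ k ≤ (2 * ‖w‖ ^ 2) ^ k := pow_le_pow_left₀ (by positivity) h1 k
        _ = 2 ^ k * ‖w‖ ^ (2 * k) := by rw [mul_pow, ← pow_mul]
    calc μ (Metric.ball w r) * ENNReal.ofReal ((1 + ‖w‖ ^ 2) ^ k)
        ≤ μ (Metric.ball w r) * ENNReal.ofReal (2 ^ k * ‖w‖ ^ (2 * k)) :=
          mul_le_mul_right (ENNReal.ofReal_le_ofReal hpow) _
      _ = ENNReal.ofReal (2 ^ k) * (μ (Metric.ball w r) * ENNReal.ofReal (‖w‖ ^ (2 * k))) := by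
          rw [ENNReal.ofReal_mul (by positivity)]; ring
      _ ≤ ENNReal.ofReal (2 ^ k) * ENNReal.ofReal (ϖ * B * Real.exp (r ^ 2)) :=
          mul_le_mul_right (KEY w r hr) _
      _ = ENNReal.ofReal (2 ^ k * (ϖ * B * Real.exp (r ^ 2))) :=
          (ENNReal.ofReal_mul (by positivity)).symm
      _ ≤ _ := ENNReal.ofReal_le_ofReal (le_max_left _ _)
  · -- small w : move the ball near the point 2
    have hsub : Metric.ball w r ⊆ Metric.ball (2 : ℂ) (r + 3) := by
      intro z hz
      rw [Metric.mem_ball] at hz ⊢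
      have h2 : dist w (2 : ℂ) ≤ ‖w‖ + 2 := by
        rw [Complex.dist_eq]
        calc ‖w - 2‖ ≤ ‖w‖ + ‖(2 : ℂ)‖ := norm_sub_le _ _
          _ = ‖w‖ + 2 := by norm_num
      calc dist z (2 : ℂ) ≤ dist z w + dist w 2 := dist_triangle _ _ _
        _ < r + 3 := by linarith
    have h2k : (1 : ENNReal) ≤ ENNReal.ofReal (‖(2 : ℂ)‖ ^ (2 * k)) := by
      rw [show ‖(2 : ℂ)‖ = 2 by norm_num]
      rw [← ENNReal.ofReal_one]
      exact ENNReal.ofReal_le_ofReal (one_le_pow₀ one_le_two)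
    have hmu : μ (Metric.ball w r) ≤ ENNReal.ofReal (ϖ * B * Real.exp ((r + 3) ^ 2)) := by
      calc μ (Metric.ball w r) ≤ μ (Metric.ball (2 : ℂ) (r + 3)) := measure_mono hsub
        _ ≤ μ (Metric.ball (2 : ℂ) (r + 3)) * ENNReal.ofReal (‖(2 : ℂ)‖ ^ (2 * k)) :=
            le_mul_of_one_le_right zero_le h2k
        _ ≤ _ := KEY 2 (r + 3) (by linarith)
    have hpow : (1 + ‖w‖ ^ 2) ^ k ≤ 2 ^ k := by
      apply pow_le_pow_left₀ (by positivity)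
      nlinarith [norm_nonneg w]
    calc μ (Metric.ball w r) * ENNReal.ofReal ((1 + ‖w‖ ^ 2) ^ k)
        ≤ ENNReal.ofReal (ϖ * B * Real.exp ((r + 3) ^ 2)) * ENNReal.ofReal (2 ^ k) :=
          mul_le_mul' hmu (ENNReal.ofReal_le_ofReal hpow)
      _ = ENNReal.ofReal (ϖ * B * Real.exp ((r + 3) ^ 2) * 2 ^ k) :=
          (ENNReal.ofReal_mul' (by positivity)).symm
      _ ≤ _ := ENNReal.ofReal_le_ofReal (le_max_right _ _)
end
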